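/- For logistic regression with p_1(x) = 1/(1 + e^{w^T x + w_0}), the unique minimizer of E(x) = (λ/2)‖x − x̄‖² + ln(1 + e^{w^T x + w_0}) is x* = x̄ − (1/λ)(1 − p*_1) w, where p*_1 ∈ (0,1) is the unique solution of p*_1 = 1/(1 + exp(α p*_1 + β)) with α = ‖w‖²/λ and β = w^T x̄ + w_0 − α. -/

import Mathlib

open scoped BigOperators RealInnerProductSpace

/-- Logistic-regression class-1 probability. -/
noncomputable def p1 {D : ℕ} (w : EuclideanSpace ℝ (Fin D)) (w0 : ℝ)
    (x : EuclideanSpace ℝ (Fin D)) : ℝ :=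
  1 / (1 + Real.exp (⟪w, x⟫ + w0))

/-- Logistic-regression inverse-classification objective. -/
noncomputable def Elr {D : ℕ} (w : EuclideanSpace ℝ (Fin D)) (w0 : ℝ) (lam : ℝ)
    (xbar : EuclideanSpace ℝ (Fin D)) (x : EuclideanSpace ℝ (Fin D)) : ℝ :=
  lam / 2 * ‖x - xbar‖ ^ 2 + Real.log (1 + Real.exp (⟪w, x⟫ + w0))

lemma logexp_hasDeriv (u : ℝ) :
    HasDerivAt (fun v => Real.log (1 + Real.exp v)) (Real.exp u / (1 + Real.exp u)) u := by
  have h1 : HasDerivAt (fun v => 1 + Real.exp v) (Real.exp u) u :=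
    (Real.hasDerivAt_exp u).const_add 1
  have := h1.log (by positivity)
  simpa using this

lemma logexp_convex : ConvexOn ℝ Set.univ (fun v => Real.log (1 + Real.exp v)) := by
  have hd : Differentiable ℝ (fun v => Real.log (1 + Real.exp v)) :=
    fun u => (logexp_hasDeriv u).differentiableAt
  have hderiv : deriv (fun v => Real.log (1 + Real.exp v)) =
      fun u => Real.exp u / (1 + Real.exp u) := funext fun u => (logexp_hasDeriv u).deriv
  apply Monotone.convexOn_univ_of_deriv hd
  rw [hderiv]
  intro a b hab
  have ha : (0:ℝ) < 1 + Real.exp a := by positivity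
  have hb : (0:ℝ) < 1 + Real.exp b := by positivity
  rw [div_le_div_iff₀ ha hb]
  nlinarith [Real.exp_le_exp.2 hab, Real.exp_pos a, Real.exp_pos b]

lemma logexp_tangent (s t : ℝ) :
    Real.log (1 + Real.exp s) + Real.exp s / (1 + Real.exp s) * (t - s)
      ≤ Real.log (1 + Real.exp t) := by
  rcases lt_trichotomy s t with h | h | h
  · have h2 := logexp_convex.le_slope_of_hasDerivAt (Set.mem_univ s) (Set.mem_univ t) h
      (logexp_hasDeriv s)
    rw [show slope (fun v => Real.log (1 + Real.exp v)) s t = (Real.log (1 + Real.exp t) - Real.log (1 + Real.exp s)) / (t - s) by rw [slope_def_field], le_div_iff₀ (by linarith)] at h2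
    linarith
  · simp [h]
  · have h2 := logexp_convex.slope_le_of_hasDerivAt (Set.mem_univ t) (Set.mem_univ s) h
      (logexp_hasDeriv s)
    rw [show slope (fun v => Real.log (1 + Real.exp v)) t s = (Real.log (1 + Real.exp s) - Real.log (1 + Real.exp t)) / (s - t) by rw [slope_def_field], div_le_iff₀ (by linarith)] at h2
    linarith

/-- the unique minimizer of the logistic-regression objective is
`x* = x̄ − (1/λ)(1 − p₁*) w`, where `p₁* ∈ (0,1)` solves `p₁* = 1/(1+exp(α p₁* + β))`
with `α = ‖w‖²/λ` and `β = wᵀx̄ + w₀ − α`. -/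
theorem logreg_closed_form_minimizer {D : ℕ} (w : EuclideanSpace ℝ (Fin D)) (hw : w ≠ 0)
    (w0 lam : ℝ) (hlam : 0 < lam) (xbar : EuclideanSpace ℝ (Fin D))
    (pstar : ℝ) (hp0 : 0 < pstar) (hp1 : pstar < 1)
    (hfix : pstar = 1 / (1 + Real.exp (‖w‖ ^ 2 / lam * pstar +
      (⟪w, xbar⟫ + w0 - ‖w‖ ^ 2 / lam)))) :
    (∀ y, Elr w w0 lam xbar (xbar - ((1 - pstar) / lam) • w) ≤ Elr w w0 lam xbar y) ∧
      ∀ z, (∀ y, Elr w w0 lam xbar z ≤ Elr w w0 lam xbar y) →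
        z = xbar - ((1 - pstar) / lam) • w := by

  set xs : EuclideanSpace ℝ (Fin D) := xbar - ((1 - pstar) / lam) • w with hxs
  set s : ℝ := ⟪w, xs⟫ + w0 with hsdef
  clear_value xs s
  have hinner_xs : ⟪w, xs⟫ = ⟪w, xbar⟫ - (1 - pstar) / lam * ‖w‖ ^ 2 := by
    rw [hxs, inner_sub_right, real_inner_smul_right, real_inner_self_eq_norm_sq]
  have hs : s = ‖w‖ ^ 2 / lam * pstar + (⟪w, xbar⟫ + w0 - ‖w‖ ^ 2 / lam) := by
    rw [hsdef, hinner_xs]; field_simp; ring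
  have hes : (0:ℝ) < 1 + Real.exp s := by positivity
  have hp : pstar = 1 / (1 + Real.exp s) := by rw [hs]; exact hfix
  have hsigma : Real.exp s / (1 + Real.exp s) = 1 - pstar := by
    rw [hp]; field_simp; ring
  -- strong convexity bound
  have key : ∀ y, Elr w w0 lam xbar xs + lam / 2 * ‖y - xs‖ ^ 2 ≤ Elr w w0 lam xbar y := by
    intro y
    have hdecomp : y - xbar = (xs - xbar) + (y - xs) := by abel
    have hnorm : ‖y - xbar‖ ^ 2 = ‖xs - xbar‖ ^ 2 + 2 * ⟪xs - xbar, y - xs⟫ + ‖y - xs‖ ^ 2 := by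
      rw [hdecomp, norm_add_sq_real]
    have hxsxbar : xs - xbar = -(((1 - pstar) / lam) • w) := by rw [hxs]; abel
    have hinner1 : ⟪xs - xbar, y - xs⟫ = -((1 - pstar) / lam * ⟪w, y - xs⟫) := by
      rw [hxsxbar, inner_neg_left, real_inner_smul_left]
    have ht : ⟪w, y⟫ + w0 - s = ⟪w, y - xs⟫ := by
      rw [inner_sub_right, hsdef]; ring
    have htan := logexp_tangent s (⟪w, y⟫ + w0)
    rw [hsigma, ht] at htan
    simp only [Elr]
    have hlam' : lam ≠ 0 := ne_of_gt hlam
    have hcalc : lam / 2 * ‖y - xbar‖ ^ 2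
        = lam / 2 * ‖xs - xbar‖ ^ 2 + lam / 2 * ‖y - xs‖ ^ 2
          - (1 - pstar) * ⟪w, y - xs⟫ := by
      rw [hnorm, hinner1]; field_simp; ring
    rw [hcalc, ← hsdef]
    linarith
  constructor
  · intro y
    have := key y
    nlinarith [sq_nonneg ‖y - xs‖]
  · intro z hz
    have h1 := key z
    have h2 := hz xs
    have h3 : lam / 2 * ‖z - xs‖ ^ 2 ≤ 0 := by linarith
    have h4 : ‖z - xs‖ ^ 2 ≤ 0 := by nlinarith
    have h5 : ‖z - xs‖ = 0 := by nlinarith [norm_nonneg (z - xs), sq_nonneg ‖z - xs‖]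
    have := norm_eq_zero.mp h5
    have := sub_eq_zero.mp this
    exact this
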